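/- For every η > 0 there exists k₀ = k₀(η) such that the following holds. Let k ≥ k₀ and n be integers with k ≤ (1−η)n, let P ⊆ {1,…,n}, put p = |P|/n, and suppose η ≤ p ≤ 1−η. Let A be a uniformly random k-element subset of {1,…,n}. Then P[|A ∩ P| ≥ pk + 0.1η√k] ≥ 0.04η and P[|A ∩ P| ≤ pk − 0.1η√k] ≥ 0.04η. -/
import Mathlib

open scoped Classical
open Finset

lemma castDescFac (m r : ℕ) :
    (m.descFactorial r : ℝ) = ∏ i ∈ Finset.range r, ((m : ℝ) - i) := by
  induction r with
  | zero => simp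
  | succ r ih =>
    rw [Nat.descFactorial_succ, Finset.prod_range_succ, ← ih]
    rcases le_or_gt r m with h | h
    · push_cast [h]; ring
    · have h1 : m.descFactorial r = 0 := Nat.descFactorial_eq_zero_iff_lt.2 h
      have h2 : m - r = 0 := Nat.sub_eq_zero_of_le h.le
      simp [h1, h2]

lemma pc (x r : ℕ) : (r.factorial : ℝ) * (x.choose r : ℝ) = ∏ i ∈ Finset.range r, ((x : ℝ) - i) := by
  rw [← castDescFac, Nat.descFactorial_eq_factorial_mul_choose]; push_cast; ring

lemma p1 (x : ℕ) : ((x.choose 1 : ℕ) : ℝ) = x := by simp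

lemma p2 (x : ℕ) : 2 * ((x.choose 2 : ℕ) : ℝ) = x * (x - 1) := by
  have := pc x 2; norm_num [Finset.prod_range_succ] at this; linarith

lemma p3 (x : ℕ) : 6 * ((x.choose 3 : ℕ) : ℝ) = x * (x - 1) * (x - 2) := by
  have := pc x 3; norm_num [Finset.prod_range_succ, Nat.factorial] at this; linarith

lemma p4 (x : ℕ) : 24 * ((x.choose 4 : ℕ) : ℝ) = x * (x - 1) * (x - 2) * (x - 3) := by
  have := pc x 4; norm_num [Finset.prod_range_succ, Nat.factorial] at this; linarith

lemma desc_id : ∀ (r k n : ℕ), r ≤ k → k ≤ n →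
    (n - r).choose (k - r) * n.descFactorial r = n.choose k * k.descFactorial r := by
  intro r
  induction r with
  | zero => intro k n _ _; simp
  | succ r ih =>
    rintro (_ | k) (_ | n) h1 h2
    · omega
    · omega
    · omega
    · have h1' : r ≤ k := Nat.succ_le_succ_iff.mp h1
      have h2' : k ≤ n := Nat.succ_le_succ_iff.mp h2
      have e1 : n + 1 - (r + 1) = n - r := by omega
      have e2 : k + 1 - (r + 1) = k - r := by omega
      rw [e1, e2, Nat.succ_descFactorial_succ, Nat.succ_descFactorial_succ]
      have key : (n + 1) * n.choose k = (n + 1).choose (k + 1) * (k + 1) := by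
        simpa [Nat.succ_eq_add_one] using Nat.add_one_mul_choose_eq n k
      calc (n - r).choose (k - r) * ((n + 1) * n.descFactorial r)
          = (n + 1) * ((n - r).choose (k - r) * n.descFactorial r) := by ring
        _ = (n + 1) * (n.choose k * k.descFactorial r) := by rw [ih k n h1' h2']
        _ = ((n + 1) * n.choose k) * k.descFactorial r := by ring
        _ = ((n + 1).choose (k + 1) * (k + 1)) * k.descFactorial r := by rw [key]
        _ = (n + 1).choose (k + 1) * ((k + 1) * k.descFactorial r) := by ring

lemma card_supersets {n k r : ℕ} (hkn : k ≤ n) (hrk : r ≤ k) (B : Finset (Fin n))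
    (hB : B.card = r) :
    ((Finset.powersetCard k (univ : Finset (Fin n))).filter (fun A => B ⊆ A)).card
      = (n - r).choose (k - r) := by
  have hcard : ((Finset.powersetCard (k - r) (univ \ B))).card = (n - r).choose (k - r) := by
    rw [Finset.card_powersetCard, Finset.card_sdiff_of_subset (Finset.subset_univ B), hB, card_univ,
      Fintype.card_fin]
  rw [← hcard]
  apply Finset.card_bij' (fun A _ => A \ B) (fun C _ => C ∪ B)
  · intro A hA
    simp only [Finset.mem_filter, Finset.mem_powersetCard] at hA
    obtain ⟨⟨-, hAcard⟩, hBA⟩ := hA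
    simp only [Finset.mem_powersetCard]
    constructor
    · exact Finset.sdiff_subset_sdiff (Finset.subset_univ A) le_rfl
    · rw [Finset.card_sdiff_of_subset hBA, hAcard, hB]
  · intro C hC
    simp only [Finset.mem_powersetCard] at hC
    obtain ⟨hCsub, hCcard⟩ := hC
    have hdisj : Disjoint C B := by
      intro s hsC hsB
      intro x hx
      have h1 := hCsub (hsC hx)
      simp only [Finset.mem_sdiff] at h1
      exact absurd (hsB hx) h1.2
    simp only [Finset.mem_filter, Finset.mem_powersetCard]
    refine ⟨⟨Finset.subset_univ _, ?_⟩, Finset.subset_union_right⟩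
    rw [Finset.card_union_of_disjoint hdisj, hCcard, hB]
    omega
  · intro A hA
    simp only [Finset.mem_filter, Finset.mem_powersetCard] at hA
    exact Finset.sdiff_union_of_subset hA.2
  · intro C hC
    simp only [Finset.mem_powersetCard] at hC
    have hdisj : Disjoint C B := by
      intro s hsC hsB
      intro x hx
      have h1 := hC.1 (hsC hx)
      simp only [Finset.mem_sdiff] at h1
      exact absurd (hsB hx) h1.2
    rw [Finset.union_sdiff_distrib, Finset.sdiff_self, Finset.union_empty,
      Finset.sdiff_eq_self_of_disjoint hdisj]

lemma sum_choose_inter {n k r : ℕ} (hrk : r ≤ k) (hkn : k ≤ n) (P : Finset (Fin n)) :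
    ∑ A ∈ Finset.powersetCard k (univ : Finset (Fin n)), ((A ∩ P).card.choose r)
      = P.card.choose r * (n - r).choose (k - r) := by
  have step1 : ∀ A : Finset (Fin n), (A ∩ P).card.choose r
      = ((P.powersetCard r).filter (fun B => B ⊆ A)).card := by
    intro A
    rw [← Finset.card_powersetCard r (A ∩ P)]
    congr 1
    ext B
    simp only [Finset.mem_powersetCard, Finset.mem_filter, Finset.subset_inter_iff]
    tauto
  simp only [step1, Finset.card_filter]
  rw [Finset.sum_comm]
  calc ∑ B ∈ P.powersetCard r, ∑ A ∈ Finset.powersetCard k (univ : Finset (Fin n)),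
        (if B ⊆ A then 1 else 0)
      = ∑ B ∈ P.powersetCard r, (n - r).choose (k - r) := by
        refine Finset.sum_congr rfl (fun B hB => ?_)
        rw [← Finset.card_filter]
        exact card_supersets hkn hrk B (Finset.mem_powersetCard.mp hB).2
    _ = P.card.choose r * (n - r).choose (k - r) := by
        rw [Finset.sum_const, Finset.card_powersetCard, smul_eq_mul]

lemma natEr {n k r : ℕ} (hrk : r ≤ k) (hkn : k ≤ n) (P : Finset (Fin n)) :
    r.factorial * (∑ A ∈ Finset.powersetCard k (univ : Finset (Fin n)),
        ((A ∩ P).card.choose r)) * n.descFactorial r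
      = n.choose k * (P.card.descFactorial r * k.descFactorial r) := by
  rw [sum_choose_inter hrk hkn P]
  calc r.factorial * (P.card.choose r * (n - r).choose (k - r)) * n.descFactorial r
      = (r.factorial * P.card.choose r) * ((n - r).choose (k - r) * n.descFactorial r) := by ring
    _ = P.card.descFactorial r * (n.choose k * k.descFactorial r) := by
        rw [← Nat.descFactorial_eq_factorial_mul_choose, desc_id r k n hrk hkn]
    _ = n.choose k * (P.card.descFactorial r * k.descFactorial r) := by ring


lemma pointwise_amgm (z lam : ℝ) (hz : 0 ≤ z) (hlam : 0 ≤ lam) :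
    3 * lam ^ 2 * z ^ 2 ≤ 2 * lam ^ 3 * z + z ^ 4 := by
  nlinarith [mul_nonneg (mul_nonneg hz (sq_nonneg (z - lam))) (by linarith : (0:ℝ) ≤ z + 2 * lam)]

lemma sq_le_imp_le {x y : ℝ} (hx : 0 ≤ x) (hy : 0 ≤ y) (h : x ^ 2 ≤ y ^ 2) : x ≤ y := by
  nlinarith

set_option maxHeartbeats 1000000 in
lemma anticonc {α : Type*} (Ω E : Finset α) (hEΩ : E ⊆ Ω) (f : α → ℝ) (t : ℝ) (ht : 0 ≤ t)
    (hmemE : ∀ x ∈ E, t ≤ f x) (hnotE : ∀ x ∈ Ω, x ∉ E → f x ≤ t)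
    (h0 : ∑ x ∈ Ω, f x = 0) (h2pos : 0 < ∑ x ∈ Ω, f x ^ 2)
    (h4 : (Ω.card : ℝ) * ∑ x ∈ Ω, f x ^ 4 ≤ 4 * (∑ x ∈ Ω, f x ^ 2) ^ 2)
    (ht2 : 50 * (Ω.card : ℝ) * t ^ 2 ≤ ∑ x ∈ Ω, f x ^ 2) :
    (Ω.card : ℝ) ≤ 50 * (E.card : ℝ) := by
  set N : ℝ := (Ω.card : ℝ) with hN
  set S2 : ℝ := ∑ x ∈ Ω, f x ^ 2 with hS2
  set S4 : ℝ := ∑ x ∈ Ω, f x ^ 4 with hS4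
  have hNpos : 0 < N := by
    rcases Finset.eq_empty_or_nonempty Ω with h | h
    · exfalso; rw [hS2, h] at h2pos; simp at h2pos
    · have : 0 < Ω.card := Finset.card_pos.mpr h
      rw [hN]; exact_mod_cast this
  have hS4nonneg : 0 ≤ S4 := Finset.sum_nonneg fun x _ => by positivity
  set s : ℝ := Real.sqrt (N * S2) with hs
  have hspos : 0 < s := Real.sqrt_pos.mpr (by positivity)
  have hs2 : s ^ 2 = N * S2 := Real.sq_sqrt (by positivity)
  set B : ℝ := ∑ x ∈ Ω, |f x| with hB
  -- Step 1 : s ≤ 2 * B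
  have step1 : s ≤ 2 * B := by
    have hsum : ∑ x ∈ Ω, (12 * s ^ 2 * N ^ 2 * f x ^ 2)
        ≤ ∑ x ∈ Ω, (16 * s ^ 3 * N * |f x| + N ^ 4 * f x ^ 4) := by
      refine Finset.sum_le_sum fun x _ => ?_
      have h := pointwise_amgm (N * |f x|) (2 * s) (by positivity) (by positivity)
      have habs2 : |f x| ^ 2 = f x ^ 2 := sq_abs _
      have habs4 : |f x| ^ 4 = f x ^ 4 := by
        rw [show (4 : ℕ) = 2 * 2 by norm_num, pow_mul, pow_mul, habs2]
      rw [← habs2, ← habs4]; linear_combination h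
    have hL : ∑ x ∈ Ω, (12 * s ^ 2 * N ^ 2 * f x ^ 2) = 12 * s ^ 2 * N ^ 2 * S2 := by
      rw [hS2, ← Finset.mul_sum]
    have hR : ∑ x ∈ Ω, (16 * s ^ 3 * N * |f x| + N ^ 4 * f x ^ 4)
        = 16 * s ^ 3 * N * B + N ^ 4 * S4 := by
      rw [Finset.sum_add_distrib, hB, hS4, ← Finset.mul_sum, ← Finset.mul_sum]
    rw [hL, hR] at hsum
    have hs4eq : s ^ 4 = (N * S2) ^ 2 := by rw [← hs2]; ring
    have e1 : 12 * s ^ 2 * N ^ 2 * S2 = 12 * N * s ^ 4 := by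
      linear_combination 12 * N ^ 2 * S2 * hs2 - 12 * N * hs4eq
    have e2 : N ^ 4 * S4 ≤ 4 * N * s ^ 4 := by
      calc N ^ 4 * S4 = N ^ 3 * (N * S4) := by ring
        _ ≤ N ^ 3 * (4 * S2 ^ 2) := mul_le_mul_of_nonneg_left h4 (by positivity)
        _ = 4 * N * (N * S2) ^ 2 := by ring
        _ = 4 * N * s ^ 4 := by rw [← hs4eq]
    have key : 8 * N * s ^ 4 ≤ 16 * s ^ 3 * N * B := by linarith
    have hs3 : 0 < s ^ 3 * N := by positivity
    nlinarith [key, hs3]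
  -- Step 2 : B = 2 * ∑ max (f x) 0
  set A : ℝ := ∑ x ∈ Ω, max (f x) 0 with hA
  have step2 : B = 2 * A := by
    have : ∀ x, |f x| = 2 * max (f x) 0 - f x := by
      intro x
      rcases le_or_gt 0 (f x) with h | h
      · rw [abs_of_nonneg h, max_eq_left h]; ring
      · rw [abs_of_neg h, max_eq_right h.le]; ring
    rw [hB, hA]
    simp only [this]
    rw [Finset.sum_sub_distrib, ← Finset.mul_sum, h0]
    ring
  -- Step 3 : A ≤ t * N + ∑ x ∈ E, f x
  have hfE_nonneg : ∀ x ∈ E, 0 ≤ f x := fun x hx => le_trans ht (hmemE x hx)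
  set SE : ℝ := ∑ x ∈ E, f x with hSE
  have step3 : A ≤ t * N + SE := by
    have hsplit : A = (∑ x ∈ Ω \ E, max (f x) 0) + ∑ x ∈ E, max (f x) 0 := by
      rw [hA, Finset.sum_sdiff hEΩ]
    have h1 : ∑ x ∈ Ω \ E, max (f x) 0 ≤ ∑ x ∈ Ω \ E, t := by
      refine Finset.sum_le_sum fun x hx => ?_
      rw [Finset.mem_sdiff] at hx
      exact max_le (hnotE x hx.1 hx.2) ht
    have h2 : ∑ x ∈ Ω \ E, t = ((Ω \ E).card : ℝ) * t := by
      rw [Finset.sum_const, nsmul_eq_mul]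
    have h3 : ((Ω \ E).card : ℝ) * t ≤ N * t := by
      have hcc : (Ω \ E).card ≤ Ω.card := Finset.card_le_card (Finset.sdiff_subset)
      have hcc' : ((Ω \ E).card : ℝ) ≤ N := by rw [hN]; exact_mod_cast hcc
      exact mul_le_mul_of_nonneg_right hcc' ht
    have h4' : ∑ x ∈ E, max (f x) 0 = SE := by
      rw [hSE]; exact Finset.sum_congr rfl fun x hx => max_eq_left (hfE_nonneg x hx)
    rw [hsplit, h4']
    nlinarith [h1, h2, h3]
  -- Step 4 : t * N ≤ s * Real.sqrt 2 / 10
  have step4 : t * N ≤ s * Real.sqrt 2 / 10 := by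
    have hsq : (t * N) ^ 2 ≤ (s * Real.sqrt 2 / 10) ^ 2 := by
      have e : (s * Real.sqrt 2 / 10) ^ 2 = s ^ 2 * 2 / 100 := by
        rw [div_pow, mul_pow, Real.sq_sqrt (by norm_num : (0:ℝ) ≤ 2)]; norm_num
      rw [e, hs2]
      calc (t * N) ^ 2 = N * (N * t ^ 2) := by ring
        _ ≤ N * (S2 / 50) := by
            refine mul_le_mul_of_nonneg_left ?_ hNpos.le
            linarith
        _ = N * S2 * 2 / 100 := by ring
    exact sq_le_imp_le (by positivity) (by positivity) hsq
  -- Step 5 : s / 10 ≤ SE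
  have hsqrt2 : Real.sqrt 2 ≤ (3/2 : ℝ) := by
    nlinarith [Real.sq_sqrt (show (0:ℝ) ≤ 2 by norm_num), Real.sqrt_nonneg 2]
  have step5 : s / 10 ≤ SE := by
    have h1 : s / 4 ≤ A := by linarith
    have h2 : s / 4 - s * Real.sqrt 2 / 10 ≤ SE := by linarith
    have h3 : s / 10 ≤ s / 4 - s * Real.sqrt 2 / 10 := by nlinarith [hspos, hsqrt2]
    linarith
  -- Step 6 : Cauchy-Schwarz twice
  set q : ℝ := (E.card : ℝ) with hq
  have hqnonneg : 0 ≤ q := by positivity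
  have cs1 : SE ^ 2 ≤ q * ∑ x ∈ E, f x ^ 2 := by
    have := sq_sum_le_card_mul_sum_sq (s := E) (f := f)
    exact_mod_cast this
  have cs2 : (∑ x ∈ E, f x ^ 2) ^ 2 ≤ q * ∑ x ∈ E, f x ^ 4 := by
    have := sq_sum_le_card_mul_sum_sq (s := E) (f := fun x => f x ^ 2)
    have e : ∀ x, (f x ^ 2) ^ 2 = f x ^ 4 := fun x => by ring
    simp only [e] at this
    exact_mod_cast this
  have hsub4 : ∑ x ∈ E, f x ^ 4 ≤ S4 :=
    Finset.sum_le_sum_of_subset_of_nonneg hEΩ (fun x _ _ => by positivity)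
  have hE2nonneg : 0 ≤ ∑ x ∈ E, f x ^ 2 := Finset.sum_nonneg fun x _ => by positivity
  -- combine : (s/10)^4 ≤ SE^4 ≤ q^3 * S4
  have hSE4 : SE ^ 4 ≤ q ^ 3 * S4 := by
    have h1 : SE ^ 4 = (SE ^ 2) ^ 2 := by ring
    have h2 : (SE ^ 2) ^ 2 ≤ (q * ∑ x ∈ E, f x ^ 2) ^ 2 := by
      have hSEnonneg : 0 ≤ SE := Finset.sum_nonneg hfE_nonneg
      have := sq_nonneg SE
      nlinarith [cs1, this, mul_nonneg hqnonneg hE2nonneg]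
    have h3 : (q * ∑ x ∈ E, f x ^ 2) ^ 2 = q ^ 2 * (∑ x ∈ E, f x ^ 2) ^ 2 := by ring
    have h4' : q ^ 2 * (∑ x ∈ E, f x ^ 2) ^ 2 ≤ q ^ 2 * (q * ∑ x ∈ E, f x ^ 4) :=
      mul_le_mul_of_nonneg_left cs2 (by positivity)
    have h5 : q ^ 2 * (q * ∑ x ∈ E, f x ^ 4) ≤ q ^ 2 * (q * S4) :=
      mul_le_mul_of_nonneg_left (mul_le_mul_of_nonneg_left hsub4 hqnonneg) (by positivity)
    calc SE ^ 4 = (SE ^ 2) ^ 2 := h1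
      _ ≤ (q * ∑ x ∈ E, f x ^ 2) ^ 2 := h2
      _ = q ^ 2 * (∑ x ∈ E, f x ^ 2) ^ 2 := h3
      _ ≤ q ^ 2 * (q * ∑ x ∈ E, f x ^ 4) := h4'
      _ ≤ q ^ 3 * S4 := by rw [show q ^ 2 * (q * S4) = q ^ 3 * S4 by ring] at h5; exact h5
  have hs4 : (s / 10) ^ 4 ≤ SE ^ 4 := by
    have hSEnonneg : 0 ≤ s / 10 := by positivity
    exact pow_le_pow_left₀ hSEnonneg step5 4
  -- s^4 = N^2 S2^2 ; N*S4 ≤ 4 S2^2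
  have final : N ^ 3 ≤ 40000 * q ^ 3 := by
    have h1 : s ^ 4 = N ^ 2 * S2 ^ 2 := by
      have h' : s ^ 4 = (N * S2) ^ 2 := by rw [← hs2]; ring
      rw [h']; ring
    have h2 : N ^ 2 * S2 ^ 2 / 10000 ≤ q ^ 3 * S4 := by
      calc N ^ 2 * S2 ^ 2 / 10000 = s ^ 4 / 10000 := by rw [h1]
        _ = (s / 10) ^ 4 := by ring
        _ ≤ SE ^ 4 := hs4
        _ ≤ q ^ 3 * S4 := hSE4
    have h3 : N ^ 3 * S2 ^ 2 / 10000 ≤ q ^ 3 * (N * S4) := by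
      have := mul_le_mul_of_nonneg_left h2 hNpos.le
      calc N ^ 3 * S2 ^ 2 / 10000 = N * (N ^ 2 * S2 ^ 2 / 10000) := by ring
        _ ≤ N * (q ^ 3 * S4) := this
        _ = q ^ 3 * (N * S4) := by ring
    have h4'' : q ^ 3 * (N * S4) ≤ q ^ 3 * (4 * S2 ^ 2) :=
      mul_le_mul_of_nonneg_left h4 (by positivity)
    have hS2sq : 0 < S2 ^ 2 := by positivity
    nlinarith [h3, h4'', hS2sq]
  have : N ≤ 50 * q := by
    have h50 : (50 * q) ^ 3 = 125000 * q ^ 3 := by ring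
    refine le_of_pow_le_pow_left₀ (by norm_num : (3:ℕ) ≠ 0) (by positivity) ?_
    rw [h50]
    nlinarith [final, pow_nonneg hqnonneg 3]
  exact this

lemma bracket_nonneg (n a b : ℝ) (hn : 4 ≤ n) (ha1 : n - 1 ≤ a) (ha2 : a ≤ n ^ 2 / 4)
    (hb1 : n - 1 ≤ b) (hb2 : b ≤ n ^ 2 / 4) :
    0 ≤ n ^ 2 * (n - 1) * (a + b - (n - 1)) - (5 * n - 6) * a * b := by
  have key : (n ^ 2 * (n - 1) * (a + b - (n - 1)) - (5 * n - 6) * a * b)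
      * (n ^ 2 / 4 - (n - 1)) ^ 2
      = ((n - 1) ^ 2 * (n - 2) * (n - 3)) * ((n ^ 2 / 4 - a) * (n ^ 2 / 4 - b))
      + (n ^ 2 * (n - 1) / 4 * (n - 2) * (n - 3)) *
          ((a - (n - 1)) * (n ^ 2 / 4 - b) + (n ^ 2 / 4 - a) * (b - (n - 1)))
      + (n ^ 2 * (n - 2) * (3 * n ^ 2 - 12 * n + 8) / 16) * ((a - (n - 1)) * (b - (n - 1))) := by
    ring
  have hq : 3 * n ^ 2 - 12 * n + 8 ≥ 0 := by nlinarith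
  have hrhs : 0 ≤ ((n - 1) ^ 2 * (n - 2) * (n - 3)) * ((n ^ 2 / 4 - a) * (n ^ 2 / 4 - b))
      + (n ^ 2 * (n - 1) / 4 * (n - 2) * (n - 3)) *
          ((a - (n - 1)) * (n ^ 2 / 4 - b) + (n ^ 2 / 4 - a) * (b - (n - 1)))
      + (n ^ 2 * (n - 2) * (3 * n ^ 2 - 12 * n + 8) / 16) * ((a - (n - 1)) * (b - (n - 1))) := by
    have t1 : (0:ℝ) ≤ (n - 1) ^ 2 * (n - 2) * (n - 3) := by nlinarith [sq_nonneg (n-1)]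
    have t2 : (0:ℝ) ≤ n ^ 2 * (n - 1) / 4 * (n - 2) * (n - 3) := by nlinarith [sq_nonneg n]
    have t3 : (0:ℝ) ≤ n ^ 2 * (n - 2) * (3 * n ^ 2 - 12 * n + 8) / 16 := by nlinarith [sq_nonneg n]
    have u1 : (0:ℝ) ≤ (n ^ 2 / 4 - a) * (n ^ 2 / 4 - b) :=
      mul_nonneg (by linarith) (by linarith)
    have u2 : (0:ℝ) ≤ (a - (n - 1)) * (n ^ 2 / 4 - b) + (n ^ 2 / 4 - a) * (b - (n - 1)) := by
      have := mul_nonneg (show (0:ℝ) ≤ a - (n-1) by linarith) (show (0:ℝ) ≤ n^2/4 - b by linarith)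
      have := mul_nonneg (show (0:ℝ) ≤ n^2/4 - a by linarith) (show (0:ℝ) ≤ b - (n-1) by linarith)
      linarith
    have u3 : (0:ℝ) ≤ (a - (n - 1)) * (b - (n - 1)) :=
      mul_nonneg (by linarith) (by linarith)
    have := mul_nonneg t1 u1
    have := mul_nonneg t2 u2
    have := mul_nonneg t3 u3
    linarith
  have hpos : (0:ℝ) < (n ^ 2 / 4 - (n - 1)) ^ 2 := by nlinarith [sq_nonneg (n - 2)]
  rw [← key] at hrhs
  by_contra h'
  push_neg at h'
  have := mul_neg_of_neg_of_pos h' hpos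
  linarith

set_option maxHeartbeats 2000000 in
/-- Anti-concentration for the hypergeometric distribution: for every `η > 0`
there is `k₀` such that for all `k₀ ≤ k ≤ (1-η) n` and every `P ⊆ {1,…,n}` with
`η ≤ p := |P|/n ≤ 1-η`, a uniformly random `k`-subset `A` of `{1,…,n}` satisfies
`ℙ[|A ∩ P| ≥ pk + 0.1 η √k] ≥ 0.04 η` and `ℙ[|A ∩ P| ≤ pk − 0.1 η √k] ≥ 0.04 η`. -/
theorem stmt8 (η : ℝ) (hη : 0 < η) :
    ∃ k₀ : ℕ, ∀ k : ℕ, k₀ ≤ k → ∀ n : ℕ, (k : ℝ) ≤ (1 - η) * n →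
      ∀ P : Finset (Fin n),
        η ≤ (P.card : ℝ) / n → (P.card : ℝ) / n ≤ 1 - η →
        let Ω := Finset.powersetCard k (Finset.univ : Finset (Fin n))
        0.04 * η ≤
            ((Ω.filter (fun A => (P.card : ℝ) / n * k + 0.1 * η * Real.sqrt k ≤
                ((A ∩ P).card : ℝ))).card : ℝ) / (Ω.card : ℝ) ∧
        0.04 * η ≤
            ((Ω.filter (fun A => ((A ∩ P).card : ℝ) ≤
                (P.card : ℝ) / n * k - 0.1 * η * Real.sqrt k)).card : ℝ) / (Ω.card : ℝ) := by
  refine ⟨⌈(2:ℝ) / η ^ 2⌉₊ + 8, ?_⟩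
  intro k hk n hkn P hp1 hp2
  intro Ω
  -- basic positivity facts
  have hn0 : 0 < n := by
    rcases Nat.eq_zero_or_pos n with h | h
    · exfalso; subst h; simp at hp1; linarith
    · exact h
  set rn : ℝ := (n : ℝ) with hrn
  set rk : ℝ := (k : ℝ) with hrk
  set rm : ℝ := (P.card : ℝ) with hrm
  have hrn0 : (0:ℝ) < rn := by rw [hrn]; exact_mod_cast hn0
  have hη2 : η ≤ 1 / 2 := by
    have := le_trans hp1 hp2; linarith
  have hk8 : 8 ≤ k := le_trans (Nat.le_add_left 8 _) hk
  have hk2 : 2 / η ^ 2 ≤ rk := by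
    have h1 : (2:ℝ) / η ^ 2 ≤ (⌈(2:ℝ) / η ^ 2⌉₊ : ℝ) := Nat.le_ceil _
    have h2 : (⌈(2:ℝ) / η ^ 2⌉₊ : ℝ) ≤ rk := by
      rw [hrk]; exact_mod_cast le_trans (Nat.le_add_right _ 8) hk
    linarith
  have hk2' : 2 ≤ η ^ 2 * rk := by
    rw [div_le_iff₀ (by positivity)] at hk2; linarith
  have hkrn : rk ≤ rn := le_trans hkn (by nlinarith)
  have hknN : k ≤ n := by
    have h' : (k:ℝ) ≤ (n:ℝ) := by rw [← hrn, ← hrk]; exact hkrn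
    exact_mod_cast h'
  have hrk8 : (8:ℝ) ≤ rk := by
    rw [hrk]; exact_mod_cast hk8
  have hrk0 : (0:ℝ) < rk := by linarith
  have hm1 : η * rn ≤ rm := (le_div_iff₀ hrn0).mp hp1
  have hm2 : rm ≤ (1 - η) * rn := by
    rw [div_le_iff₀ hrn0] at hp2; linarith
  have hηrk : 4 ≤ η * rk := by
    have h1 : η ^ 2 * rk ≤ (1/2) * (η * rk) := by
      nlinarith [mul_nonneg hη.le hrk0.le]
    linarith
  have hηn : 4 ≤ η * rn := by
    have := mul_le_mul_of_nonneg_left hkrn hη.le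
    linarith
  have hrn4 : (4:ℝ) ≤ rn := by nlinarith
  have hrn8 : (8:ℝ) ≤ rn := by nlinarith
  have hkup : rk ≤ rn - 4 := by
    have : rk ≤ rn - η * rn := by linarith [hkn]
    linarith
  have hm4 : 4 ≤ rm := by linarith
  have hmup : rm ≤ rn - 4 := by nlinarith
  -- a, b
  set a : ℝ := rk * (rn - rk) with ha_def
  set b : ℝ := rm * (rn - rm) with hb_def
  have hrk1 : (1:ℝ) ≤ rk := by linarith
  have ha1 : rn - 1 ≤ a := by
    have hx := mul_nonneg (show (0:ℝ) ≤ rk - 1 by linarith) (show (0:ℝ) ≤ rn - rk - 1 by linarith)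
    nlinarith [hx]
  have ha2 : a ≤ rn ^ 2 / 4 := by nlinarith [sq_nonneg (rn - 2 * rk)]
  have hb1 : rn - 1 ≤ b := by
    have hx := mul_nonneg (show (0:ℝ) ≤ rm - 1 by linarith) (show (0:ℝ) ≤ rn - rm - 1 by linarith)
    nlinarith [hx]
  have hb2 : b ≤ rn ^ 2 / 4 := by nlinarith [sq_nonneg (rn - 2 * rm)]
  have hapos : 0 < a := by nlinarith
  have hbpos : 0 < b := by nlinarith
  have ha_low : η * rn * rk ≤ a := by nlinarith [hkn]
  have hb_low : η * rn * (rn / 2) ≤ b := by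
    rcases le_or_gt rm (rn / 2) with h | h
    · have := mul_le_mul hm1 (show rn / 2 ≤ rn - rm by linarith) (by linarith) (by linarith)
      nlinarith [this]
    · have := mul_le_mul (show rn / 2 ≤ rm by linarith) (show η * rn ≤ rn - rm by linarith)
        (by positivity) (by linarith)
      nlinarith [this]
  have hab_low : η ^ 2 * rk * rn ^ 3 / 2 ≤ a * b := by
    have := mul_le_mul ha_low hb_low (by positivity) hapos.le
    nlinarith [this]
  have hab1 : rn ^ 2 * (rn - 1) ≤ a * b := by
    have h1 : 2 * rn ^ 3 ≤ η ^ 2 * rk * rn ^ 3 := by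
      nlinarith [pow_pos hrn0 3]
    nlinarith [h1, sq_nonneg rn, hrn0]
  -- cardinality of Ω
  set C0 : ℝ := ((Ω.card : ℕ) : ℝ) with hC0_def
  have hΩcard : Ω.card = n.choose k := by
    show (Finset.powersetCard k (univ : Finset (Fin n))).card = n.choose k
    rw [Finset.card_powersetCard, card_univ, Fintype.card_fin]
  have hC0pos : 0 < C0 := by
    rw [hC0_def, hΩcard]; exact_mod_cast Nat.choose_pos hknN
  -- moment identities
  have E1 : (((∑ A ∈ Ω, ((A ∩ P).card.choose 1)) : ℕ) : ℝ) * rn = C0 * (rm * rk) := by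
    have h := natEr (show 1 ≤ k by omega) hknN P
    rw [show Nat.factorial 1 = 1 from rfl] at h
    have h' := congrArg (fun z : ℕ => (z : ℝ)) h
    push_cast [castDescFac, Finset.prod_range_succ, Finset.prod_range_zero] at h'
    rw [hC0_def, hΩcard]
    push_cast
    linear_combination h'
  have E2 : 2 * (((∑ A ∈ Ω, ((A ∩ P).card.choose 2)) : ℕ) : ℝ) * (rn * (rn - 1))
      = C0 * (rm * (rm - 1)) * (rk * (rk - 1)) := by
    have h := natEr (show 2 ≤ k by omega) hknN P
    rw [show Nat.factorial 2 = 2 from rfl] at h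
    have h' := congrArg (fun z : ℕ => (z : ℝ)) h
    push_cast [castDescFac, Finset.prod_range_succ, Finset.prod_range_zero] at h'
    rw [hC0_def, hΩcard]
    push_cast
    linear_combination h'
  have E3 : 6 * (((∑ A ∈ Ω, ((A ∩ P).card.choose 3)) : ℕ) : ℝ) * (rn * (rn - 1) * (rn - 2))
      = C0 * (rm * (rm - 1) * (rm - 2)) * (rk * (rk - 1) * (rk - 2)) := by
    have h := natEr (show 3 ≤ k by omega) hknN P
    rw [show Nat.factorial 3 = 6 from rfl] at h
    have h' := congrArg (fun z : ℕ => (z : ℝ)) h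
    push_cast [castDescFac, Finset.prod_range_succ, Finset.prod_range_zero] at h'
    rw [hC0_def, hΩcard]
    push_cast
    linear_combination h'
  have E4 : 24 * (((∑ A ∈ Ω, ((A ∩ P).card.choose 4)) : ℕ) : ℝ)
        * (rn * (rn - 1) * (rn - 2) * (rn - 3))
      = C0 * (rm * (rm - 1) * (rm - 2) * (rm - 3)) * (rk * (rk - 1) * (rk - 2) * (rk - 3)) := by
    have h := natEr (show 4 ≤ k by omega) hknN P
    rw [show Nat.factorial 4 = 24 from rfl] at h
    have h' := congrArg (fun z : ℕ => (z : ℝ)) h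
    push_cast [castDescFac, Finset.prod_range_succ, Finset.prod_range_zero] at h'
    rw [hC0_def, hΩcard]
    push_cast
    linear_combination h'
  -- the random variable (scaled and centered)
  set g : Finset (Fin n) → ℝ := fun A => rn * ((A ∩ P).card : ℝ) - rm * rk with hg_def
  have hTsum : ∀ r : ℕ, (((∑ A ∈ Ω, ((A ∩ P).card.choose r)) : ℕ) : ℝ)
      = ∑ A ∈ Ω, (((A ∩ P).card.choose r : ℕ) : ℝ) := fun r => by push_cast; rfl
  have hconst : ∀ c : ℝ, ∑ _A ∈ Ω, c = C0 * c := by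
    intro c; rw [Finset.sum_const, nsmul_eq_mul, hC0_def]
  -- expansions of power sums of g in terms of the choose-sums
  have ex0 : ∑ A ∈ Ω, g A
      = rn * (((∑ A ∈ Ω, ((A ∩ P).card.choose 1)) : ℕ) : ℝ) - C0 * (rm * rk) := by
    rw [hTsum 1, Finset.mul_sum, ← hconst (rm * rk), ← Finset.sum_sub_distrib]
    refine Finset.sum_congr rfl fun A _ => ?_
    rw [p1]
  have ex2 : ∑ A ∈ Ω, (g A) ^ 2
      = rn ^ 2 * (2 * (((∑ A ∈ Ω, ((A ∩ P).card.choose 2)) : ℕ) : ℝ)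
          + (((∑ A ∈ Ω, ((A ∩ P).card.choose 1)) : ℕ) : ℝ))
        - 2 * rn * rm * rk * (((∑ A ∈ Ω, ((A ∩ P).card.choose 1)) : ℕ) : ℝ)
        + C0 * (rm ^ 2 * rk ^ 2) := by
    have hpt : ∀ A ∈ Ω, (g A) ^ 2
        = rn ^ 2 * (2 * (((A ∩ P).card.choose 2 : ℕ) : ℝ) + (((A ∩ P).card.choose 1 : ℕ) : ℝ))
          - 2 * rn * rm * rk * (((A ∩ P).card.choose 1 : ℕ) : ℝ) + rm ^ 2 * rk ^ 2 := by
      intro A _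
      have h1 := p1 (A ∩ P).card
      have h2 := p2 (A ∩ P).card
      show (rn * ((A ∩ P).card : ℝ) - rm * rk) ^ 2 = _
      linear_combination (-(rn ^ 2)) * h2 + (2 * rn * rm * rk - rn ^ 2) * h1
    rw [Finset.sum_congr rfl hpt, hTsum 1, hTsum 2]
    simp only [Finset.sum_add_distrib, Finset.sum_sub_distrib, ← Finset.mul_sum,
      Finset.sum_const, nsmul_eq_mul]
    rw [hC0_def]; ring
  have ex4 : ∑ A ∈ Ω, (g A) ^ 4
      = rn ^ 4 * (24 * (((∑ A ∈ Ω, ((A ∩ P).card.choose 4)) : ℕ) : ℝ)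
            + 36 * (((∑ A ∈ Ω, ((A ∩ P).card.choose 3)) : ℕ) : ℝ)
            + 14 * (((∑ A ∈ Ω, ((A ∩ P).card.choose 2)) : ℕ) : ℝ)
            + (((∑ A ∈ Ω, ((A ∩ P).card.choose 1)) : ℕ) : ℝ))
        - 4 * rn ^ 3 * rm * rk * (6 * (((∑ A ∈ Ω, ((A ∩ P).card.choose 3)) : ℕ) : ℝ)
            + 6 * (((∑ A ∈ Ω, ((A ∩ P).card.choose 2)) : ℕ) : ℝ)
            + (((∑ A ∈ Ω, ((A ∩ P).card.choose 1)) : ℕ) : ℝ))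
        + 6 * rn ^ 2 * rm ^ 2 * rk ^ 2 * (2 * (((∑ A ∈ Ω, ((A ∩ P).card.choose 2)) : ℕ) : ℝ)
            + (((∑ A ∈ Ω, ((A ∩ P).card.choose 1)) : ℕ) : ℝ))
        - 4 * rn * rm ^ 3 * rk ^ 3 * (((∑ A ∈ Ω, ((A ∩ P).card.choose 1)) : ℕ) : ℝ)
        + C0 * (rm ^ 4 * rk ^ 4) := by
    have hpt : ∀ A ∈ Ω, (g A) ^ 4
        = rn ^ 4 * (24 * (((A ∩ P).card.choose 4 : ℕ) : ℝ)
              + 36 * (((A ∩ P).card.choose 3 : ℕ) : ℝ)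
              + 14 * (((A ∩ P).card.choose 2 : ℕ) : ℝ) + (((A ∩ P).card.choose 1 : ℕ) : ℝ))
          - 4 * rn ^ 3 * rm * rk * (6 * (((A ∩ P).card.choose 3 : ℕ) : ℝ)
              + 6 * (((A ∩ P).card.choose 2 : ℕ) : ℝ) + (((A ∩ P).card.choose 1 : ℕ) : ℝ))
          + 6 * rn ^ 2 * rm ^ 2 * rk ^ 2 * (2 * (((A ∩ P).card.choose 2 : ℕ) : ℝ)
              + (((A ∩ P).card.choose 1 : ℕ) : ℝ))
          - 4 * rn * rm ^ 3 * rk ^ 3 * (((A ∩ P).card.choose 1 : ℕ) : ℝ)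
          + rm ^ 4 * rk ^ 4 := by
      intro A _
      have h1 := p1 (A ∩ P).card
      have h2 := p2 (A ∩ P).card
      have h3 := p3 (A ∩ P).card
      have h4 := p4 (A ∩ P).card
      show (rn * ((A ∩ P).card : ℝ) - rm * rk) ^ 4 = _
      linear_combination (-(rn ^ 4)) * h4 + (-(6 * rn ^ 4 - 4 * rn ^ 3 * rm * rk)) * h3
        + (-(7 * rn ^ 4 - 12 * rn ^ 3 * rm * rk + 6 * rn ^ 2 * rm ^ 2 * rk ^ 2)) * h2
        + (-(rn ^ 4 - 4 * rn ^ 3 * rm * rk + 6 * rn ^ 2 * rm ^ 2 * rk ^ 2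
            - 4 * rn * rm ^ 3 * rk ^ 3)) * h1
    rw [Finset.sum_congr rfl hpt, hTsum 1, hTsum 2, hTsum 3, hTsum 4]
    simp only [Finset.sum_add_distrib, Finset.sum_sub_distrib, ← Finset.mul_sum,
      Finset.sum_const, nsmul_eq_mul]
    rw [hC0_def]; ring
  -- the three key identities
  have G0 : ∑ A ∈ Ω, g A = 0 := by
    rw [ex0]; linear_combination E1
  have G2 : (∑ A ∈ Ω, (g A) ^ 2) * (rn - 1) = C0 * a * b := by
    rw [ex2, ha_def, hb_def]
    linear_combination rn * E2 + (rn - 2 * rm * rk) * (rn - 1) * E1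
  set num4 : ℝ := 3 * a ^ 2 * b ^ 2 * (rn - 2) * (rn - 3)
      + a * b * rn ^ 2 * (rn - 1) * (rn - 2) * (rn - 3)
      - 6 * a * b * (rn ^ 2 * (rn - 1) * (a + b - (rn - 1)) - (5 * rn - 6) * a * b)
      with hnum4_def
  have G4 : (∑ A ∈ Ω, (g A) ^ 4) * (rn * (rn - 1) ^ 2 * (rn - 2) * (rn - 3))
      = C0 * rn * num4 := by
    rw [ex4, hnum4_def, ha_def, hb_def]
    linear_combination (rn ^ 4 * (rn - 1)) * E4
      + ((6 * rn ^ 4 - 4 * rn ^ 3 * rm * rk) * (rn - 1) * (rn - 3)) * E3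
      + ((7 * rn ^ 4 - 12 * rn ^ 3 * rm * rk + 6 * rn ^ 2 * rm ^ 2 * rk ^ 2)
          * (rn - 1) * (rn - 2) * (rn - 3)) * E2
      + ((rn ^ 4 - 4 * rn ^ 3 * rm * rk + 6 * rn ^ 2 * rm ^ 2 * rk ^ 2
          - 4 * rn * rm ^ 3 * rk ^ 3) * (rn - 1) ^ 2 * (rn - 2) * (rn - 3)) * E1
  -- positivity of the variance sum
  have h2pos : 0 < ∑ A ∈ Ω, (g A) ^ 2 := by
    have hab : 0 < C0 * a * b := mul_pos (mul_pos hC0pos hapos) hbpos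
    by_contra hcon
    push_neg at hcon
    have h' := mul_le_mul_of_nonneg_right hcon (show (0:ℝ) ≤ rn - 1 by linarith)
    rw [G2] at h'
    linarith only [h', hab]
  -- fourth moment bound
  have hBr : 0 ≤ rn ^ 2 * (rn - 1) * (a + b - (rn - 1)) - (5 * rn - 6) * a * b :=
    bracket_nonneg rn a b hrn4 ha1 ha2 hb1 hb2
  have hkey : num4 ≤ 4 * a ^ 2 * b ^ 2 * (rn - 2) * (rn - 3) := by
    rw [hnum4_def]
    have h23 : (0:ℝ) ≤ (rn - 2) * (rn - 3) :=
      mul_nonneg (by linarith) (by linarith)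
    have habnn : (0:ℝ) ≤ a * b := (mul_pos hapos hbpos).le
    have h1 : a * b * (rn ^ 2 * (rn - 1)) * ((rn - 2) * (rn - 3))
        ≤ (a * b) * (a * b) * ((rn - 2) * (rn - 3)) :=
      mul_le_mul_of_nonneg_right (mul_le_mul_of_nonneg_left hab1 habnn) h23
    have h2 : (0:ℝ) ≤ 6 * (a * b)
        * (rn ^ 2 * (rn - 1) * (a + b - (rn - 1)) - (5 * rn - 6) * a * b) :=
      mul_nonneg (mul_nonneg (by norm_num) habnn) hBr
    linarith only [h1, h2]
  have hprodpos : (0:ℝ) < rn * (rn - 1) ^ 2 * (rn - 2) * (rn - 3) :=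
    mul_pos (mul_pos (mul_pos hrn0 (pow_pos (by linarith : (0:ℝ) < rn - 1) 2))
      (by linarith : (0:ℝ) < rn - 2)) (by linarith : (0:ℝ) < rn - 3)
  have h4bound : C0 * ∑ A ∈ Ω, (g A) ^ 4 ≤ 4 * (∑ A ∈ Ω, (g A) ^ 2) ^ 2 := by
    refine le_of_mul_le_mul_right ?_ hprodpos
    calc C0 * (∑ A ∈ Ω, (g A) ^ 4) * (rn * (rn - 1) ^ 2 * (rn - 2) * (rn - 3))
        = C0 * (C0 * rn * num4) := by rw [mul_assoc, G4]
      _ ≤ C0 * (C0 * rn * (4 * a ^ 2 * b ^ 2 * (rn - 2) * (rn - 3))) := by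
          have hcc : (0:ℝ) ≤ C0 * (C0 * rn) :=
            mul_nonneg hC0pos.le (mul_nonneg hC0pos.le hrn0.le)
          linarith only [mul_le_mul_of_nonneg_left hkey hcc]
      _ = 4 * (∑ A ∈ Ω, (g A) ^ 2) ^ 2 * (rn * (rn - 1) ^ 2 * (rn - 2) * (rn - 3)) := by
          linear_combination (-(4 * rn * (rn - 2) * (rn - 3)))
            * (C0 * a * b + (∑ A ∈ Ω, (g A) ^ 2) * (rn - 1)) * G2
  -- threshold
  have hsqk : Real.sqrt rk ^ 2 = rk := Real.sq_sqrt hrk0.le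
  have hsqknn : 0 ≤ Real.sqrt rk := Real.sqrt_nonneg _
  set t' : ℝ := rn * (0.1 * η * Real.sqrt rk) with ht'_def
  have ht'nn : 0 ≤ t' := by
    rw [ht'_def]
    have h01 : (0:ℝ) ≤ 0.1 * η * Real.sqrt rk :=
      mul_nonneg (mul_nonneg (by norm_num) hη.le) hsqknn
    exact mul_nonneg hrn0.le h01
  have ht2' : 50 * C0 * t' ^ 2 ≤ ∑ A ∈ Ω, (g A) ^ 2 := by
    refine le_of_mul_le_mul_right ?_ (show (0:ℝ) < rn - 1 by linarith)
    rw [G2]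
    have expand : 50 * C0 * t' ^ 2 * (rn - 1) = 0.5 * C0 * (η ^ 2 * rk * rn ^ 2 * (rn - 1)) := by
      rw [ht'_def, mul_pow, mul_pow, mul_pow, hsqk]; ring
    rw [expand]
    have habnn2 : 0.5 * (η ^ 2 * rk * rn ^ 2 * (rn - 1)) ≤ a * b := by
      have hnn : (0:ℝ) ≤ η ^ 2 * rk * rn ^ 2 := by positivity
      linarith only [hab_low, hnn]
    linarith only [mul_le_mul_of_nonneg_left habnn2 hC0pos.le]
  have hfact : rn * (rm / rn * rk) = rm * rk := by field_simp
  constructor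
  · -- upper tail
    set Eup := Ω.filter (fun A => rm / rn * rk + 0.1 * η * Real.sqrt rk ≤ ((A ∩ P).card : ℝ))
      with hEup_def
    have hmem : ∀ A ∈ Eup, t' ≤ g A := by
      intro A hA
      rw [hEup_def, Finset.mem_filter] at hA
      have h := mul_le_mul_of_nonneg_left hA.2 hrn0.le
      show t' ≤ rn * ((A ∩ P).card : ℝ) - rm * rk
      rw [ht'_def]
      linarith only [h, hfact]
    have hnot : ∀ A ∈ Ω, A ∉ Eup → g A ≤ t' := by
      intro A hAΩ hA
      have hc : ¬(rm / rn * rk + 0.1 * η * Real.sqrt rk ≤ ((A ∩ P).card : ℝ)) := by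
        intro hcon
        exact hA (by rw [hEup_def, Finset.mem_filter]; exact ⟨hAΩ, hcon⟩)
      push_neg at hc
      have h := mul_le_mul_of_nonneg_left hc.le hrn0.le
      show rn * ((A ∩ P).card : ℝ) - rm * rk ≤ t'
      rw [ht'_def]
      linarith only [h, hfact]
    have hcard := anticonc Ω Eup (Finset.filter_subset _ _) g t' ht'nn hmem hnot G0 h2pos
      h4bound ht2'
    rw [le_div_iff₀ hC0pos]
    have hcoef : (0:ℝ) ≤ 0.02 - 0.04 * η := by linarith
    linarith only [hcard, mul_nonneg hcoef hC0pos.le]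
  · -- lower tail
    set f : Finset (Fin n) → ℝ := fun A => rm * rk - rn * ((A ∩ P).card : ℝ) with hf_def
    have hfg : ∀ A ∈ Ω, f A = -(g A) := fun A _ => by
      show rm * rk - rn * ((A ∩ P).card : ℝ) = -(rn * ((A ∩ P).card : ℝ) - rm * rk); ring
    have hf0 : ∑ A ∈ Ω, f A = 0 := by
      rw [Finset.sum_congr rfl hfg, Finset.sum_neg_distrib, G0, neg_zero]
    have hf2 : ∑ A ∈ Ω, (f A) ^ 2 = ∑ A ∈ Ω, (g A) ^ 2 := by
      refine Finset.sum_congr rfl fun A hA => ?_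
      rw [hfg A hA]; ring
    have hf4 : ∑ A ∈ Ω, (f A) ^ 4 = ∑ A ∈ Ω, (g A) ^ 4 := by
      refine Finset.sum_congr rfl fun A hA => ?_
      rw [hfg A hA]; ring
    set Edn := Ω.filter (fun A => ((A ∩ P).card : ℝ) ≤ rm / rn * rk - 0.1 * η * Real.sqrt rk)
      with hEdn_def
    have hmem : ∀ A ∈ Edn, t' ≤ f A := by
      intro A hA
      rw [hEdn_def, Finset.mem_filter] at hA
      have h := mul_le_mul_of_nonneg_left hA.2 hrn0.le
      show t' ≤ rm * rk - rn * ((A ∩ P).card : ℝ)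
      rw [ht'_def]
      linarith only [h, hfact]
    have hnot : ∀ A ∈ Ω, A ∉ Edn → f A ≤ t' := by
      intro A hAΩ hA
      have hc : ¬(((A ∩ P).card : ℝ) ≤ rm / rn * rk - 0.1 * η * Real.sqrt rk) := by
        intro hcon
        exact hA (by rw [hEdn_def, Finset.mem_filter]; exact ⟨hAΩ, hcon⟩)
      push_neg at hc
      have h := mul_le_mul_of_nonneg_left hc.le hrn0.le
      show rm * rk - rn * ((A ∩ P).card : ℝ) ≤ t'
      rw [ht'_def]
      linarith only [h, hfact]
    have hcard := anticonc Ω Edn (Finset.filter_subset _ _) f t' ht'nn hmem hnot hf0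
      (by rw [hf2]; exact h2pos) (by rw [hf2, hf4]; exact h4bound) (by rw [hf2]; exact ht2')
    rw [le_div_iff₀ hC0pos]
    have hcoef : (0:ℝ) ≤ 0.02 - 0.04 * η := by linarith
    linarith only [hcard, mul_nonneg hcoef hC0pos.le]
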